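/- arXiv:1707.04787 — 3 statements merged into one kernel-verified Lean document; each statement's English description precedes it below -/
import Mathlib

section
/- Let F, G : ℝ² → ℝ be differentiable on a convex domain D, and suppose there exist positive constants μ₁, μ₂, μ₃ such that uniformly on D: ∂F/∂x₁ ≥ -μ₁, |∂F/∂x₂| + |∂G/∂x₁| ≤ μ₂, and ∂G/∂x₂ ≥ μ₃. Then for all x = (x₁,x₂), y = (y₁,y₂) in D, (F(x)-F(y))(x₁-y₁) + (G(x)-G(y))(x₂-y₂) ≥ -(μ₁ + μ₂²/(2μ₃))(x₁-y₁)² + (μ₃/2)(x₂-y₂)². -/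
theorem aux_eigs (μ₁ μ₂ μ₃ a b e d v₁ v₂ : ℝ) (hμ₃ : 0 < μ₃)
    (ha : a ≥ -μ₁) (hbc : |b| + |e| ≤ μ₂) (hd : d ≥ μ₃) :
    (v₁ * a + v₂ * b) * v₁ + (v₁ * e + v₂ * d) * v₂ -
      (-(μ₁ + μ₂ ^ 2 / (2 * μ₃)) * v₁ ^ 2 + μ₃ / 2 * v₂ ^ 2) ≥ 0 := by
  have hb : b * (v₁ * v₂) ≥ -(|b| * (|v₁| * |v₂|)) := by
    rw [← abs_mul, ← abs_mul]; exact neg_abs_le _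
  have he : e * (v₁ * v₂) ≥ -(|e| * (|v₁| * |v₂|)) := by
    rw [← abs_mul, ← abs_mul]; exact neg_abs_le _
  have habs : (|b| + |e|) * (|v₁| * |v₂|) ≤ μ₂ * (|v₁| * |v₂|) :=
    mul_le_mul_of_nonneg_right hbc (mul_nonneg (abs_nonneg _) (abs_nonneg _))
  have h2 : μ₂ * (|v₁| * |v₂|) ≤ (μ₂ ^ 2 * v₁ ^ 2 + μ₃ ^ 2 * v₂ ^ 2) / (2 * μ₃) := by
    rw [le_div_iff₀ (by positivity)]
    nlinarith [sq_nonneg (μ₂ * |v₁| - μ₃ * |v₂|), sq_abs v₁, sq_abs v₂]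
  have heq : (μ₂ ^ 2 * v₁ ^ 2 + μ₃ ^ 2 * v₂ ^ 2) / (2 * μ₃)
      = μ₂ ^ 2 / (2 * μ₃) * v₁ ^ 2 + μ₃ / 2 * v₂ ^ 2 := by
    field_simp
  have hyoung : μ₂ * (|v₁| * |v₂|) ≤ μ₂ ^ 2 / (2 * μ₃) * v₁ ^ 2 + μ₃ / 2 * v₂ ^ 2 := by
    rw [← heq]; exact h2
  have hdd : d * v₂ ^ 2 ≥ μ₃ * v₂ ^ 2 := mul_le_mul_of_nonneg_right hd (sq_nonneg v₂)
  have haa : a * v₁ ^ 2 ≥ -μ₁ * v₁ ^ 2 := mul_le_mul_of_nonneg_right ha (sq_nonneg v₁)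
  nlinarith [hb, he, habs, hyoung, hdd, haa]

/-- Lemma `lem:eigs`: derivative bounds imply the one-sided monotonicity (M3). -/
theorem stmt_0 (D : Set (ℝ × ℝ)) (hD : Convex ℝ D)
    (F G : ℝ × ℝ → ℝ) (F' G' : ℝ × ℝ → (ℝ × ℝ →L[ℝ] ℝ))
    (hF : ∀ p ∈ D, HasFDerivAt F (F' p) p)
    (hG : ∀ p ∈ D, HasFDerivAt G (G' p) p)
    (μ₁ μ₂ μ₃ : ℝ) (hμ₁ : 0 < μ₁) (hμ₂ : 0 < μ₂) (hμ₃ : 0 < μ₃)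
    (hdF1 : ∀ p ∈ D, F' p (1, 0) ≥ -μ₁)
    (hcross : ∀ p ∈ D, |F' p (0, 1)| + |G' p (1, 0)| ≤ μ₂)
    (hdG2 : ∀ p ∈ D, G' p (0, 1) ≥ μ₃) :
    ∀ x ∈ D, ∀ y ∈ D,
      (F x - F y) * (x.1 - y.1) + (G x - G y) * (x.2 - y.2) ≥
        -(μ₁ + μ₂ ^ 2 / (2 * μ₃)) * (x.1 - y.1) ^ 2 + (μ₃ / 2) * (x.2 - y.2) ^ 2 := by
  intro x hx y hy
  set v₁ : ℝ := x.1 - y.1 with hv₁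
  set v₂ : ℝ := x.2 - y.2 with hv₂
  set c : ℝ := -(μ₁ + μ₂ ^ 2 / (2 * μ₃)) * v₁ ^ 2 + (μ₃ / 2) * v₂ ^ 2 with hc
  -- the segment
  set γ : ℝ → ℝ × ℝ := fun t => y + t • (x - y) with hγ
  have hγmem : ∀ t ∈ Set.Icc (0:ℝ) 1, γ t ∈ D := by
    intro t ht
    have := hD hy hx (by linarith [ht.1, ht.2] : (0:ℝ) ≤ 1 - t) ht.1 (by ring)
    convert this using 1
    simp only [hγ]
    module
  have hγderiv : ∀ t : ℝ, HasDerivAt γ (x - y) t := by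
    intro t
    have h1 : HasDerivAt (fun t : ℝ => t • (x - y)) ((1:ℝ) • (x - y)) t :=
      (hasDerivAt_id t).smul_const (x - y)
    simpa only [one_smul] using h1.const_add y
  -- decomposition of the vector x - y
  have hvec : (x - y : ℝ × ℝ) = v₁ • ((1:ℝ), (0:ℝ)) + v₂ • ((0:ℝ), (1:ℝ)) := by
    apply Prod.ext <;> simp [hv₁, hv₂]
  have happ : ∀ L : ℝ × ℝ →L[ℝ] ℝ, L (x - y) = v₁ * L (1, 0) + v₂ * L (0, 1) := by
    intro L
    rw [hvec, map_add, map_smul, map_smul, smul_eq_mul, smul_eq_mul]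
  -- g t = F(γ t) v₁ + G(γ t) v₂ - c t
  set g : ℝ → ℝ := fun t => F (γ t) * v₁ + G (γ t) * v₂ - c * t with hg
  have hgderiv : ∀ t ∈ Set.Icc (0:ℝ) 1,
      HasDerivAt g ((F' (γ t)) (x - y) * v₁ + (G' (γ t)) (x - y) * v₂ - c) t := by
    intro t ht
    have hFd : HasDerivAt (fun t => F (γ t)) ((F' (γ t)) (x - y)) t :=
      (hF (γ t) (hγmem t ht)).comp_hasDerivAt t (hγderiv t)
    have hGd : HasDerivAt (fun t => G (γ t)) ((G' (γ t)) (x - y)) t :=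
      (hG (γ t) (hγmem t ht)).comp_hasDerivAt t (hγderiv t)
    have hct : HasDerivAt (fun t : ℝ => c * t) c t := by
      simpa using (hasDerivAt_id t).const_mul c
    exact ((hFd.mul_const v₁).add (hGd.mul_const v₂)).sub hct
  -- the pointwise derivative bound
  have hbound : ∀ p ∈ D, (F' p) (x - y) * v₁ + (G' p) (x - y) * v₂ - c ≥ 0 := by
    intro p hp
    rw [happ (F' p), happ (G' p)]
    exact aux_eigs μ₁ μ₂ μ₃ _ _ _ _ v₁ v₂ hμ₃ (hdF1 p hp) (hcross p hp) (hdG2 p hp)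
  -- monotonicity of g on [0,1]
  have hmono : MonotoneOn g (Set.Icc (0:ℝ) 1) := by
    have hcont : ContinuousOn g (Set.Icc (0:ℝ) 1) := fun t ht =>
      (hgderiv t ht).continuousAt.continuousWithinAt
    have hint : interior (Set.Icc (0:ℝ) 1) = Set.Ioo (0:ℝ) 1 := interior_Icc
    apply monotoneOn_of_deriv_nonneg (convex_Icc 0 1) hcont
    · intro t ht
      rw [hint] at ht
      exact (hgderiv t (Set.mem_Icc_of_Ioo ht)).differentiableAt.differentiableWithinAt
    · intro t ht
      rw [hint] at ht
      have ht' := Set.mem_Icc_of_Ioo ht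
      rw [(hgderiv t ht').deriv]
      exact hbound (γ t) (hγmem t ht')
  have h01 : g 0 ≤ g 1 := hmono (Set.left_mem_Icc.2 zero_le_one)
    (Set.right_mem_Icc.2 zero_le_one) zero_le_one
  have hγ0 : γ 0 = y := by simp [hγ]
  have hγ1 : γ 1 = x := by simp [hγ]
  simp only [hg, hγ0, hγ1, mul_zero, mul_one, sub_zero] at h01
  simp only [hc] at h01 ⊢
  linarith
end

section
/- Let f₁(u) = u(u-a)(u-1) with 0 < a < 1 and let F(u,w) = f₁(u) + w, G(u,w) = -ε(κu - w) with ε, κ > 0. Let μ > 0 be such that f₁'(x) ≥ -μ for all x ∈ ℝ. Then F, G satisfy condition (M3) with α = μ + (1+εκ)²/(2ε) and β = ε/2; that is, for all x = (x₁,x₂), y = (y₁,y₂) ∈ ℝ², (F(x)-F(y))(x₁-y₁) + (G(x)-G(y))(x₂-y₂) ≥ -α(x₁-y₁)² + β(x₂-y₂)². -/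
/-- Verification of condition (M3) for the FitzHugh-Nagumo model. -/
theorem stmt_16 (a ε κ μ : ℝ) (ha0 : 0 < a) (ha1 : a < 1) (hε : 0 < ε)
    (hκ : 0 < κ) (hμ : 0 < μ)
    (f₁ : ℝ → ℝ) (hf₁ : f₁ = fun u => u * (u - a) * (u - 1))
    (hμbound : ∀ x, deriv f₁ x ≥ -μ)
    (F G : ℝ → ℝ → ℝ)
    (hF : F = fun u w => f₁ u + w)
    (hG : G = fun u w => -ε * (κ * u - w)) :
    ∀ x y : ℝ × ℝ,
      (F x.1 x.2 - F y.1 y.2) * (x.1 - y.1) + (G x.1 x.2 - G y.1 y.2) * (x.2 - y.2) ≥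
        -(μ + (1 + ε * κ) ^ 2 / (2 * ε)) * (x.1 - y.1) ^ 2 +
          (ε / 2) * (x.2 - y.2) ^ 2 := by
  have hderiv : ∀ t : ℝ, deriv f₁ t = 3 * t ^ 2 - 2 * (a + 1) * t + a := by
    intro t
    have h : HasDerivAt (fun u : ℝ => u * (u - a) * (u - 1))
        (3 * t ^ 2 - 2 * (a + 1) * t + a) t := by
      have := (((hasDerivAt_id t).mul ((hasDerivAt_id t).sub_const a)).mul
        ((hasDerivAt_id t).sub_const 1))
      refine this.congr_deriv ?_
      simp
      ring
    rw [hf₁]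
    exact h.deriv
  intro x y
  have hd := hμbound ((x.1 + y.1) / 2)
  rw [hderiv] at hd
  subst hF hG hf₁
  simp only
  have h1 : (x.1 - y.1) ^ 2 * (3 * ((x.1 + y.1) / 2) ^ 2 - 2 * (a + 1) * ((x.1 + y.1) / 2) + a)
      ≥ (x.1 - y.1) ^ 2 * (-μ) :=
    mul_le_mul_of_nonneg_left hd (sq_nonneg _)
  obtain ⟨u, hu⟩ : ∃ u, u = x.1 - y.1 := ⟨_, rfl⟩
  obtain ⟨v, hv⟩ : ∃ v, v = x.2 - y.2 := ⟨_, rfl⟩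
  rw [← hu] at h1
  have hA : (x.1 * (x.1 - a) * (x.1 - 1) - y.1 * (y.1 - a) * (y.1 - 1)) * u ≥ -μ * u ^ 2 := by
    subst hu
    nlinarith [h1, sq_nonneg ((x.1 - y.1) ^ 2)]
  have hB : (1 - ε * κ) * (u * v) + (ε / 2) * v ^ 2 + (1 + ε * κ) ^ 2 / (2 * ε) * u ^ 2
      = (((1 - ε * κ) * u + ε * v) ^ 2 + 4 * ε * κ * u ^ 2) / (2 * ε) := by
    field_simp
    ring
  have hB2 : (1 - ε * κ) * (u * v) + (ε / 2) * v ^ 2 + (1 + ε * κ) ^ 2 / (2 * ε) * u ^ 2 ≥ 0 := by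
    rw [hB]
    positivity
  subst hu hv
  nlinarith [hA, hB2]
end

section
/- Let G(u,w) = (1/τ_u)((1-s)(w-1) + s·w) where s = s(u) = (1/2)(1+tanh(κ(u-u_g))) and τ_u = τ_open + (τ_close - τ_open)s, with κ, τ_open, τ_close > 0. If w ∈ [0,1], then |∂G/∂u| ≤ κ·(τ_max + |τ_close - τ_open|)/τ_min², where τ_min = min{τ_open,τ_close}, τ_max = max{τ_open,τ_close}. -/
lemma tanh_hasDerivAt (x : ℝ) :
    HasDerivAt Real.tanh (1 - Real.tanh x ^ 2) x := by
  have h := (Real.hasDerivAt_sinh x).div (Real.hasDerivAt_cosh x) (Real.cosh_pos x).ne'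
  have hfun : (Real.sinh / Real.cosh) = Real.tanh := by
    funext y; rw [Pi.div_apply, Real.tanh_eq_sinh_div_cosh]
  rw [hfun] at h
  refine h.congr_deriv ?_
  have hc := (Real.cosh_pos x).ne'
  rw [Real.tanh_eq_sinh_div_cosh]
  field_simp

lemma tanh_sq_lt_one (x : ℝ) : Real.tanh x ^ 2 < 1 := by
  rw [Real.tanh_eq_sinh_div_cosh, div_pow, div_lt_one (by positivity)]
  nlinarith [Real.cosh_sq x]

set_option maxHeartbeats 1600000 in
/-- Bound on `∂G/∂u` for the regularized Mitchell-Schaeffer model. -/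
theorem stmt_19 (κ ug τopen τclose : ℝ) (hκ : 0 < κ)
    (hopen : 0 < τopen) (hclose : 0 < τclose)
    (s τu : ℝ → ℝ)
    (hs : s = fun u => (1 / 2) * (1 + Real.tanh (κ * (u - ug))))
    (hτu : τu = fun u => τopen + (τclose - τopen) * s u)
    (G : ℝ → ℝ → ℝ)
    (hG : G = fun u w => (1 / τu u) * ((1 - s u) * (w - 1) + s u * w))
    (τmin τmax : ℝ) (hmin : τmin = min τopen τclose) (hmax : τmax = max τopen τclose)
    (w : ℝ) (hw : w ∈ Set.Icc (0 : ℝ) 1) :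
    ∀ u, |deriv (fun u => G u w) u| ≤
      κ * (τmax + |τclose - τopen|) / τmin ^ 2 := by
  intro u
  subst hs hτu hG hmin hmax
  obtain ⟨hw0, hw1⟩ := hw
  set t : ℝ := Real.tanh (κ * (u - ug)) with hT
  have ht2 : t ^ 2 < 1 := tanh_sq_lt_one _
  have htlt : -1 < t ∧ t < 1 := abs_lt.mp (by nlinarith [abs_nonneg t, sq_abs t])
  -- value abbreviations
  set sv : ℝ := (1 / 2) * (1 + t) with hsv
  set Tv : ℝ := τopen + (τclose - τopen) * sv with hTv
  set sp : ℝ := (1 / 2) * ((1 - t ^ 2) * κ) with hsp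
  have hs01 : 0 < sv ∧ sv < 1 := by constructor <;> (rw [hsv]; nlinarith [htlt.1, htlt.2])
  have hτmin : 0 < min τopen τclose := lt_min hopen hclose
  have hTlb : min τopen τclose ≤ Tv := by
    rw [hTv]
    nlinarith [min_le_left τopen τclose, min_le_right τopen τclose, hs01.1, hs01.2]
  have hTub : Tv ≤ max τopen τclose := by
    rw [hTv]
    nlinarith [le_max_left τopen τclose, le_max_right τopen τclose, hs01.1, hs01.2]
  have hTpos : 0 < Tv := lt_of_lt_of_le hτmin hTlb
  -- derivatives
  have h1 : HasDerivAt (fun u : ℝ => κ * (u - ug)) κ u := by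
    simpa using ((hasDerivAt_id u).sub_const ug).const_mul κ
  have h2 : HasDerivAt (fun u : ℝ => Real.tanh (κ * (u - ug))) ((1 - t ^ 2) * κ) u :=
    by have := (tanh_hasDerivAt (κ * (u - ug))).comp u h1; exact this
  have hS : HasDerivAt (fun u : ℝ => (1 / 2) * (1 + Real.tanh (κ * (u - ug)))) sp u :=
    (h2.const_add 1).const_mul (1 / 2)
  have hTd : HasDerivAt
      (fun u : ℝ => τopen + (τclose - τopen) * ((1 / 2) * (1 + Real.tanh (κ * (u - ug)))))
      ((τclose - τopen) * sp) u := (hS.const_mul (τclose - τopen)).const_add τopen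
  have hN : HasDerivAt
      (fun u : ℝ => (1 - (1 / 2) * (1 + Real.tanh (κ * (u - ug)))) * (w - 1)
        + (1 / 2) * (1 + Real.tanh (κ * (u - ug))) * w)
      (-sp * (w - 1) + sp * w) u := by
    simpa [Pi.add_def] using (((hasDerivAt_const u (1:ℝ)).sub hS).mul_const (w - 1)).add (hS.mul_const w)
  have hD : HasDerivAt (fun u : ℝ =>
      (1 / (τopen + (τclose - τopen) * ((1 / 2) * (1 + Real.tanh (κ * (u - ug)))))) *
        ((1 - (1 / 2) * (1 + Real.tanh (κ * (u - ug)))) * (w - 1)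
          + (1 / 2) * (1 + Real.tanh (κ * (u - ug))) * w))
      (((0 * Tv - 1 * ((τclose - τopen) * sp)) / Tv ^ 2) *
          ((1 - sv) * (w - 1) + sv * w) + (1 / Tv) * (-sp * (w - 1) + sp * w)) u :=
    (((hasDerivAt_const u (1:ℝ)).div hTd hTpos.ne').mul hN)
  have hderiv := hD.deriv
  simp only [] at hderiv ⊢
  rw [hderiv]
  have hEq : ((0 * Tv - 1 * ((τclose - τopen) * sp)) / Tv ^ 2) *
        ((1 - sv) * (w - 1) + sv * w) + (1 / Tv) * (-sp * (w - 1) + sp * w)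
      = sp * (Tv - ((1 - sv) * (w - 1) + sv * w) * (τclose - τopen)) / Tv ^ 2 := by
    field_simp
    ring
  rw [hEq, abs_div, abs_mul, abs_of_pos (show (0:ℝ) < Tv ^ 2 by positivity)]
  have hsp_nonneg : 0 ≤ sp := by rw [hsp]; nlinarith
  have hsp_abs : |sp| ≤ κ := by rw [abs_of_nonneg hsp_nonneg, hsp]; nlinarith
  clear hD hderiv hN hS hTd h1 h2 hEq hT
  clear_value t sv Tv sp
  have hNabs : |(1 - sv) * (w - 1) + sv * w| ≤ 1 := by
    rw [abs_le]; constructor <;> nlinarith [hs01.1, hs01.2]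
  have h3 : |((1 - sv) * (w - 1) + sv * w) * (τclose - τopen)| ≤ |τclose - τopen| := by
    rw [abs_mul]
    nlinarith [abs_nonneg ((1 - sv) * (w - 1) + sv * w), abs_nonneg (τclose - τopen), hNabs]
  have hmid : |Tv - ((1 - sv) * (w - 1) + sv * w) * (τclose - τopen)|
      ≤ max τopen τclose + |τclose - τopen| := by
    rw [abs_le]
    constructor <;>
      nlinarith [neg_abs_le (((1 - sv) * (w - 1) + sv * w) * (τclose - τopen)),
        le_abs_self (((1 - sv) * (w - 1) + sv * w) * (τclose - τopen)), h3, hTub, hTpos]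
  refine div_le_div₀ (by positivity) ?_ (by positivity) ?_
  · exact mul_le_mul hsp_abs hmid (abs_nonneg _) hκ.le
  · exact pow_le_pow_left₀ hτmin.le hTlb 2
end
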